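/- If G is a simple graph with all vertex degrees at most d, then the edges of G can be properly edge-colored with d+1 colors (i.e., there is a function from edges to a set of d+1 colors such that any two edges sharing a vertex receive different colors). -/

import Mathlib

open Finset

namespace Vizing

variable {V : Type}

/-- `c` properly colors the edge set `S`. -/
def Proper {d : ℕ} (c : Sym2 V → Fin (d+1)) (S : Finset (Sym2 V)) : Prop :=
  ∀ e ∈ S, ∀ f ∈ S, e ≠ f → (∃ v, v ∈ e ∧ v ∈ f) → c e ≠ c f

/-- color `γ` appears on an `S`-edge at `v`. -/
def HasCol {d : ℕ} (S : Finset (Sym2 V)) (c : Sym2 V → Fin (d+1)) (v : V) (γ : Fin (d+1)) : Prop :=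
  ∃ f ∈ S, v ∈ f ∧ c f = γ

lemma exists_free [DecidableEq V] {d : ℕ} (S : Finset (Sym2 V)) (c : Sym2 V → Fin (d+1)) (v : V)
    (h : (S.filter (fun f => v ∈ f)).card ≤ d) : ∃ γ, ¬ HasCol S c v γ := by
  classical
  have hcard : ((S.filter (fun f => v ∈ f)).image c).card < Fintype.card (Fin (d+1)) := by
    calc ((S.filter (fun f => v ∈ f)).image c).card ≤ _ := Finset.card_image_le
    _ < Fintype.card (Fin (d+1)) := by simpa using Nat.lt_succ_of_le h
  by_contra hall
  push_neg at hall
  have : (Finset.univ : Finset (Fin (d+1))) ⊆ (S.filter (fun f => v ∈ f)).image c := by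
    intro γ _
    obtain ⟨f, hf, hvf, hcf⟩ := hall γ
    exact Finset.mem_image.2 ⟨f, Finset.mem_filter.2 ⟨hf, hvf⟩, hcf⟩
  have := Finset.card_le_card this
  simp only [Finset.card_univ] at this
  omega

open SimpleGraph

/-- An interior vertex of a path has two distinct neighbors. -/
lemma interior_two_nbrs {K : SimpleGraph V} {a b z : V} (p : K.Walk a b) (hp : p.IsPath)
    (hz : z ∈ p.support) (hza : z ≠ a) (hzb : z ≠ b) :
    ∃ w₁ w₂, w₁ ≠ w₂ ∧ K.Adj z w₁ ∧ K.Adj z w₂ := by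
  classical
  set p₁ := p.takeUntil z hz with hp₁
  set p₂ := p.dropUntil z hz with hp₂
  have hsp : p₁.append p₂ = p := p.take_spec hz
  have hnd : (p₁.append p₂).support.Nodup := by rw [hsp]; exact hp.support_nodup
  rw [Walk.support_append, List.nodup_append] at hnd
  -- first edge of p₂ : Adj z w₁ with w₁ ∈ p₂.support.tail
  obtain ⟨w₁, hadj1, hw₁⟩ : ∃ w₁, K.Adj z w₁ ∧ w₁ ∈ p₂.support.tail := by
    cases p₂ with
    | nil => exact absurd rfl hzb
    | cons h q => exact ⟨_, h, by simp⟩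
  -- last edge of p₁ : Adj w₂ z with w₂ ∈ p₁.support
  obtain ⟨w₂, hadj2, hw₂⟩ : ∃ w₂, K.Adj w₂ z ∧ w₂ ∈ p₁.support := by
    obtain ⟨u, h, q, hq⟩ := Walk.exists_eq_cons_of_ne hza p₁.reverse
    refine ⟨u, h.symm, ?_⟩
    have : u ∈ p₁.reverse.support := by rw [hq]; simp
    rwa [Walk.support_reverse, List.mem_reverse] at this
  refine ⟨w₁, w₂, ?_, hadj1, hadj2.symm⟩
  intro hww
  exact hnd.2.2 w₂ hw₂ w₁ hw₁ hww.symm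


lemma support_nested {K : SimpleGraph V}
    (hdeg2 : ∀ v w₁ w₂ w₃, K.Adj v w₁ → K.Adj v w₂ → K.Adj v w₃ → w₁ = w₂ ∨ w₁ = w₃ ∨ w₂ = w₃) :
    ∀ (n : ℕ) {u b z : V} (p : K.Walk u b) (q : K.Walk u z) (A : Set V),
    p.length + q.length ≤ n → p.IsPath → q.IsPath →
    (∀ w₁ w₂, K.Adj u w₁ → K.Adj u w₂ → w₁ ∉ A → w₂ ∉ A → w₁ = w₂) →
    (∀ w ∈ p.support.tail, w ∉ A) → (∀ w ∈ q.support.tail, w ∉ A) →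
    (∀ w ∈ p.support, w ∈ q.support) ∨ (∀ w ∈ q.support, w ∈ p.support) := by
  intro n
  induction n with
  | zero =>
    intro u b z p q A hlen hp hq hA hpA hqA
    cases p with
    | nil => left; intro w hw; simp at hw; subst hw; exact q.start_mem_support
    | cons h p' => simp at hlen
  | succ n ih =>
    intro u b z p q A hlen hp hq hA hpA hqA
    cases p with
    | nil => left; intro w hw; simp at hw; subst hw; exact q.start_mem_support
    | cons hadj₁ p' =>
      cases q with
      | nil => right; intro w hw; simp at hw; subst hw; exact Walk.start_mem_support _
      | cons hadj₂ q' =>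
        rename_i a₁ a₂
        have ha₁ : a₁ ∉ A := hpA a₁ (by simp)
        have ha₂ : a₂ ∉ A := hqA a₂ (by simp)
        have heq : a₁ = a₂ := hA a₁ a₂ hadj₁ hadj₂ ha₁ ha₂
        subst heq
        rw [Walk.cons_isPath_iff] at hp hq
        have key := ih p' q' (insert u A)
          (by simp only [Walk.length_cons] at hlen; omega) hp.1 hq.1
          (fun w₁ w₂ h1 h2 hw1 hw2 => by
            simp only [Set.mem_insert_iff, not_or] at hw1 hw2
            rcases hdeg2 a₁ w₁ w₂ u h1 h2 hadj₁.symm with h | h | h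
            · exact h
            · exact absurd h hw1.1
            · exact absurd h hw2.1)
          (fun w hw => by
            simp only [Set.mem_insert_iff, not_or]
            have hwsup : w ∈ p'.support := List.mem_of_mem_tail hw
            exact ⟨fun h => hp.2 (h ▸ hwsup), hpA w (by simpa using hwsup)⟩)
          (fun w hw => by
            simp only [Set.mem_insert_iff, not_or]
            have hwsup : w ∈ q'.support := List.mem_of_mem_tail hw
            exact ⟨fun h => hq.2 (h ▸ hwsup), hqA w (by simpa using hwsup)⟩)
        rcases key with h | h
        · left; intro w hw
          rw [Walk.support_cons] at hw ⊢
          rcases List.mem_cons.1 hw with rfl | hw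
          · simp
          · exact List.mem_cons_of_mem _ (h w hw)
        · right; intro w hw
          rw [Walk.support_cons] at hw ⊢
          rcases List.mem_cons.1 hw with rfl | hw
          · simp
          · exact List.mem_cons_of_mem _ (h w hw)

lemma three_leaf {K : SimpleGraph V} [DecidableEq V]
    (hdeg2 : ∀ v w₁ w₂ w₃, K.Adj v w₁ → K.Adj v w₂ → K.Adj v w₃ → w₁ = w₂ ∨ w₁ = w₃ ∨ w₂ = w₃)
    {a b z : V} (hab : a ≠ b) (haz : a ≠ z) (hbz : b ≠ z)
    (da : ∀ w₁ w₂, K.Adj a w₁ → K.Adj a w₂ → w₁ = w₂)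
    (db : ∀ w₁ w₂, K.Adj b w₁ → K.Adj b w₂ → w₁ = w₂)
    (dz : ∀ w₁ w₂, K.Adj z w₁ → K.Adj z w₂ → w₁ = w₂)
    (h1 : K.Reachable a b) (h2 : K.Reachable a z) : False := by
  obtain ⟨p₀⟩ := h1
  obtain ⟨q₀⟩ := h2
  set p := p₀.toPath
  set q := q₀.toPath
  have key := support_nested hdeg2 (p.1.length + q.1.length) p.1 q.1 ∅ le_rfl p.2 q.2
    (fun w₁ w₂ h1 h2 _ _ => da w₁ w₂ h1 h2) (by simp) (by simp)
  rcases key with h | h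
  · obtain ⟨w₁, w₂, hne, hw1, hw2⟩ :=
      interior_two_nbrs q.1 q.2 (h b p.1.end_mem_support) (Ne.symm hab) hbz
    exact hne (db w₁ w₂ hw1 hw2)
  · obtain ⟨w₁, w₂, hne, hw1, hw2⟩ :=
      interior_two_nbrs p.1 p.2 (h z q.1.end_mem_support) (Ne.symm haz) (Ne.symm hbz)
    exact hne (dz w₁ w₂ hw1 hw2)


section Swap

variable {d : ℕ} {S : Finset (Sym2 V)} {c : Sym2 V → Fin (d+1)} {α β : Fin (d+1)} {U : Set V}

/-- The graph of edges colored `α` or `β`. -/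
def Kgraph (S : Finset (Sym2 V)) (c : Sym2 V → Fin (d+1)) (α β : Fin (d+1)) : SimpleGraph V :=
  SimpleGraph.fromEdgeSet {f : Sym2 V | f ∈ S ∧ (c f = α ∨ c f = β)}

lemma Kgraph_adj {v w : V} :
    (Kgraph S c α β).Adj v w ↔ (s(v,w) ∈ S ∧ (c s(v,w) = α ∨ c s(v,w) = β)) ∧ v ≠ w := by
  simp [Kgraph]

open Classical in
/-- Swap colors `α`,`β` on all edges inside `U`. -/
noncomputable def swapc (S : Finset (Sym2 V)) (c : Sym2 V → Fin (d+1)) (α β : Fin (d+1))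
    (U : Set V) : Sym2 V → Fin (d+1) :=
  fun f => if (c f = α ∨ c f = β) ∧ ∃ v, v ∈ f ∧ v ∈ U then (if c f = α then β else α) else c f

/-- closure hypothesis abbreviation -/
def UCl (S : Finset (Sym2 V)) (c : Sym2 V → Fin (d+1)) (α β : Fin (d+1)) (U : Set V) : Prop :=
  ∀ f ∈ S, (c f = α ∨ c f = β) → ∀ v ∈ f, ∀ w ∈ f, v ∈ U → w ∈ U

lemma swapc_eq_of_notmem (hUcl : UCl S c α β U) {f : Sym2 V} (hf : f ∈ S) {v : V} (hv : v ∈ f)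
    (hvU : v ∉ U) : swapc S c α β U f = c f := by
  have hnz : ¬ ((c f = α ∨ c f = β) ∧ ∃ w, w ∈ f ∧ w ∈ U) := by
    rintro ⟨hcol, w, hwf, hwU⟩
    exact hvU (hUcl f hf hcol w hwf v hv hwU)
  rw [swapc, if_neg hnz]

lemma swapc_eq_of_ncol {f : Sym2 V} (h1 : c f ≠ α) (h2 : c f ≠ β) :
    swapc S c α β U f = c f := by
  have hnz : ¬ ((c f = α ∨ c f = β) ∧ ∃ w, w ∈ f ∧ w ∈ U) := by
    rintro ⟨hcol, _⟩; tauto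
  rw [swapc, if_neg hnz]

lemma swapc_alpha {f : Sym2 V} (h1 : c f = α) {v : V} (hv : v ∈ f) (hvU : v ∈ U) :
    swapc S c α β U f = β := by
  rw [swapc, if_pos ⟨Or.inl h1, v, hv, hvU⟩, if_pos h1]

lemma swapc_beta (hαβ : α ≠ β) {f : Sym2 V} (h1 : c f = β) {v : V} (hv : v ∈ f) (hvU : v ∈ U) :
    swapc S c α β U f = α := by
  rw [swapc, if_pos ⟨Or.inr h1, v, hv, hvU⟩, if_neg (by rw [h1]; exact hαβ.symm)]

lemma swapc_hascol_alpha (hUcl : UCl S c α β U) (hαβ : α ≠ β) {v : V} (hv : v ∈ U) :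
    HasCol S (swapc S c α β U) v α ↔ HasCol S c v β := by
  constructor
  · rintro ⟨f, hf, hvf, hcf⟩
    by_cases h1 : c f = α
    · rw [swapc_alpha h1 hvf hv] at hcf; exact absurd hcf.symm hαβ
    by_cases h2 : c f = β
    · exact ⟨f, hf, hvf, h2⟩
    · rw [swapc_eq_of_ncol h1 h2] at hcf; exact absurd hcf h1
  · rintro ⟨f, hf, hvf, hcf⟩
    exact ⟨f, hf, hvf, swapc_beta hαβ hcf hvf hv⟩

lemma swapc_hascol_beta (hUcl : UCl S c α β U) (hαβ : α ≠ β) {v : V} (hv : v ∈ U) :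
    HasCol S (swapc S c α β U) v β ↔ HasCol S c v α := by
  constructor
  · rintro ⟨f, hf, hvf, hcf⟩
    by_cases h2 : c f = β
    · rw [swapc_beta hαβ h2 hvf hv] at hcf; exact absurd hcf hαβ
    by_cases h1 : c f = α
    · exact ⟨f, hf, hvf, h1⟩
    · rw [swapc_eq_of_ncol h1 h2] at hcf; exact absurd hcf h2
  · rintro ⟨f, hf, hvf, hcf⟩
    exact ⟨f, hf, hvf, swapc_alpha hcf hvf hv⟩

lemma swapc_hascol_notmem (hUcl : UCl S c α β U) {v : V} (hv : v ∉ U) (γ : Fin (d+1)) :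
    HasCol S (swapc S c α β U) v γ ↔ HasCol S c v γ := by
  constructor
  · rintro ⟨f, hf, hvf, hcf⟩
    exact ⟨f, hf, hvf, by rwa [swapc_eq_of_notmem hUcl hf hvf hv] at hcf⟩
  · rintro ⟨f, hf, hvf, hcf⟩
    exact ⟨f, hf, hvf, by rwa [swapc_eq_of_notmem hUcl hf hvf hv]⟩

lemma swapc_hascol_other {v : V} {γ : Fin (d+1)} (h1 : γ ≠ α) (h2 : γ ≠ β) :
    HasCol S (swapc S c α β U) v γ ↔ HasCol S c v γ := by
  have key : ∀ f : Sym2 V, (swapc S c α β U f = γ ↔ c f = γ) := by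
    intro f
    by_cases hca : c f = α
    · constructor
      · intro h'
        by_cases hz : ∃ w, w ∈ f ∧ w ∈ U
        · obtain ⟨w, hw, hwU⟩ := hz
          rw [swapc_alpha hca hw hwU] at h'
          exact absurd h'.symm h2
        · rw [swapc, if_neg (by rintro ⟨_, hex⟩; exact hz hex)] at h'
          exact h'
      · intro h'; exact absurd (hca.symm.trans h') h1.symm
    by_cases hcb : c f = β
    · constructor
      · intro h'
        by_cases hz : ∃ w, w ∈ f ∧ w ∈ U
        · obtain ⟨w, hw, hwU⟩ := hz
          by_cases hab : α = β
          · rw [swapc_alpha (hcb.trans hab.symm) hw hwU] at h'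
            exact absurd h'.symm h2
          · rw [swapc_beta hab hcb hw hwU] at h'
            exact absurd h'.symm h1
        · rw [swapc, if_neg (by rintro ⟨_, hex⟩; exact hz hex)] at h'
          exact h'
      · intro h'; exact absurd (hcb.symm.trans h') h2.symm
    · rw [swapc_eq_of_ncol hca hcb]
  constructor
  · rintro ⟨f, hf, hvf, hcf⟩; exact ⟨f, hf, hvf, (key f).1 hcf⟩
  · rintro ⟨f, hf, hvf, hcf⟩; exact ⟨f, hf, hvf, (key f).2 hcf⟩

lemma swapc_proper (hUcl : UCl S c α β U) (hαβ : α ≠ β) (hprop : Proper c S) :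
    Proper (swapc S c α β U) S := by
  intro e he f hf hef ⟨v, hve, hvf⟩
  have hne := hprop e he f hf hef ⟨v, hve, hvf⟩
  by_cases hze : (c e = α ∨ c e = β) ∧ ∃ w, w ∈ e ∧ w ∈ U
  · have hvU : v ∈ U := by
      obtain ⟨w, hw, hwU⟩ := hze.2
      exact hUcl e he hze.1 w hw v hve hwU
    by_cases hcf : c f = α ∨ c f = β
    · rcases hze.1 with h1 | h1 <;> rcases hcf with h2 | h2
      · exact absurd (h1.trans h2.symm) hne
      · rw [swapc_alpha h1 hve hvU, swapc_beta hαβ h2 hvf hvU]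
        exact hαβ.symm
      · rw [swapc_beta hαβ h1 hve hvU, swapc_alpha h2 hvf hvU]
        exact hαβ
      · exact absurd (h1.trans h2.symm) hne
    · push_neg at hcf
      rw [swapc_eq_of_ncol hcf.1 hcf.2]
      rcases hze.1 with h1 | h1
      · rw [swapc_alpha h1 hve hvU]; exact fun h => hcf.2 h.symm
      · rw [swapc_beta hαβ h1 hve hvU]; exact fun h => hcf.1 h.symm
  · rw [swapc, if_neg hze]
    by_cases hzf : (c f = α ∨ c f = β) ∧ ∃ w, w ∈ f ∧ w ∈ U
    · have hvU : v ∈ U := by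
        obtain ⟨w, hw, hwU⟩ := hzf.2
        exact hUcl f hf hzf.1 w hw v hvf hwU
      have hce : ¬ (c e = α ∨ c e = β) := fun h => hze ⟨h, v, hve, hvU⟩
      push_neg at hce
      rcases hzf.1 with h2 | h2
      · rw [swapc_alpha h2 hvf hvU]; exact hce.2
      · rw [swapc_beta hαβ h2 hvf hvU]; exact hce.1
    · rw [swapc, if_neg hzf]
      exact hne

end Swap

lemma chain_concat {R : V → V → Prop} : ∀ (l : List V) (a b : V),
    List.Chain R a (l ++ [b]) ↔ List.Chain R a l ∧ R (l.getLastD a) b := by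
  intro l
  induction l with
  | nil => intro a b; simp [List.Chain]
  | cons c l ih =>
    intro a b
    simp only [List.Chain] at ih ⊢
    simp only [List.cons_append, List.isChain_cons_cons, ih, List.getLastD_cons]
    tauto

lemma chain_imp_mem {R R' : V → V → Prop} : ∀ (l : List V) (a : V),
    List.Chain R a l → (∀ u v, u ∈ a :: l → v ∈ l → R u v → R' u v) → List.Chain R' a l := by
  intro l
  induction l with
  | nil => intro a _ _; exact List.Chain.nil
  | cons c l ih =>
    intro a hc himp
    simp only [List.Chain, List.isChain_cons_cons] at hc ⊢
    refine ⟨himp a c (by simp) (by simp) hc.1, ih c hc.2 fun u v hu hv hr => ?_⟩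
    refine himp u v ?_ (by simp [hv]) hr
    rcases List.mem_cons.1 hu with rfl | hu
    · simp
    · simp [hu]

lemma chain_split_old {R : V → V → Prop} {a c : V} {l₁ l₂ : List V} :
    List.Chain R a (l₁ ++ c :: l₂) ↔ List.Chain R a (l₁ ++ [c]) ∧ List.Chain R c l₂ := by
  exact List.isChain_cons_split

lemma hascol_update_notmem [DecidableEq (Sym2 V)] {d : ℕ} {S : Finset (Sym2 V)}
    {c : Sym2 V → Fin (d+1)} {g : Sym2 V} {γ : Fin (d+1)} {v : V} (hv : v ∉ g) (δ : Fin (d+1)) :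
    HasCol S (Function.update c g γ) v δ ↔ HasCol S c v δ := by
  constructor
  · rintro ⟨f, hf, hvf, hcf⟩
    refine ⟨f, hf, hvf, ?_⟩
    rwa [Function.update_of_ne (fun h => hv (by rw [← h]; exact hvf)) _ _] at hcf
  · rintro ⟨f, hf, hvf, hcf⟩
    refine ⟨f, hf, hvf, ?_⟩
    rwa [Function.update_of_ne (fun h => hv (by rw [← h]; exact hvf)) _ _]

lemma proper_recolor [DecidableEq (Sym2 V)] {d : ℕ} {S : Finset (Sym2 V)}
    {c : Sym2 V → Fin (d+1)} (hc : Proper c S) {x t : V} {γ : Fin (d+1)}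
    (h1 : ¬ HasCol S c x γ) (h2 : ¬ HasCol S c t γ) :
    Proper (Function.update c s(x,t) γ) S := by
  intro e he f hf hef hv
  obtain ⟨v, hve, hvf⟩ := hv
  by_cases hge : e = s(x,t) <;> by_cases hgf : f = s(x,t)
  · exact absurd (hge.trans hgf.symm) hef
  · subst hge
    rw [Function.update_self, Function.update_of_ne hgf]
    rcases Sym2.mem_iff.1 hve with rfl | rfl
    · exact fun h => h1 ⟨f, hf, hvf, h.symm⟩
    · exact fun h => h2 ⟨f, hf, hvf, h.symm⟩
  · subst hgf
    rw [Function.update_self, Function.update_of_ne hge]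
    rcases Sym2.mem_iff.1 hvf with rfl | rfl
    · exact fun h => h1 ⟨e, he, hve, h⟩
    · exact fun h => h2 ⟨e, he, hve, h⟩
  · rw [Function.update_of_ne hge, Function.update_of_ne hgf]
    exact hc e he f hf hef ⟨v, hve, hvf⟩

lemma proper_extend [DecidableEq (Sym2 V)] {d : ℕ} {S : Finset (Sym2 V)}
    {c : Sym2 V → Fin (d+1)} (hc : Proper c S) {x t : V} {γ : Fin (d+1)} (hg : s(x,t) ∉ S)
    (h1 : ¬ HasCol S c x γ) (h2 : ¬ HasCol S c t γ) :
    Proper (Function.update c s(x,t) γ) (insert s(x,t) S) := by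
  intro e he f hf hef hv
  obtain ⟨v, hve, hvf⟩ := hv
  rcases Finset.mem_insert.1 he with heq | heS <;> rcases Finset.mem_insert.1 hf with hfq | hfS <;> clear he hf
  · exact absurd (heq.trans hfq.symm) hef
  · subst heq
    rw [Function.update_self, Function.update_of_ne (fun h => hg (by rw [← h]; exact hfS))]
    rcases Sym2.mem_iff.1 hve with rfl | rfl
    · exact fun h => h1 ⟨f, hfS, hvf, h.symm⟩
    · exact fun h => h2 ⟨f, hfS, hvf, h.symm⟩
  · subst hfq
    rw [Function.update_self, Function.update_of_ne (fun h => hg (by rw [← h]; exact heS))]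
    rcases Sym2.mem_iff.1 hvf with rfl | rfl
    · exact fun h => h1 ⟨e, heS, hve, h⟩
    · exact fun h => h2 ⟨e, heS, hve, h⟩
  · rw [Function.update_of_ne (fun h => hg (by rw [← h]; exact heS)),
      Function.update_of_ne (fun h => hg (by rw [← h]; exact hfS))]
    exact hc e heS f hfS hef ⟨v, hve, hvf⟩

section Fan

variable [DecidableEq (Sym2 V)] {d : ℕ} (S : Finset (Sym2 V)) (x y₀ : V)

/-- `y₀ :: T` is a fan around `x` w.r.t. coloring `c`. -/
def IsFan (c : Sym2 V → Fin (d+1)) (T : List V) : Prop :=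
  (y₀ :: T).Nodup ∧ (∀ z ∈ T, s(x,z) ∈ S) ∧
    List.Chain (fun a b => ¬ HasCol S c a (c s(x,b))) y₀ T

variable {S x y₀}

lemma fan_mem_ne_x (hnd : ∀ f ∈ S, ¬ f.IsDiag) (hxy : x ≠ y₀) {c : Sym2 V → Fin (d+1)}
    {T : List V} (hT : IsFan S x y₀ c T) : ∀ z ∈ y₀ :: T, z ≠ x := by
  intro z hz
  rcases List.mem_cons.1 hz with rfl | hz
  · exact hxy.symm
  · intro h
    subst h
    exact hnd _ (hT.2.1 z hz) (by simp [Sym2.isDiag_iff_proj_eq])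

/-- The key rotation lemma: a fan whose last vertex misses a color that is also missing at `x`
can be "rotated away", giving a proper coloring of `insert s(x,y₀) S`. -/
lemma rotate (hnd : ∀ f ∈ S, ¬ f.IsDiag) (hxy : x ≠ y₀) (he : s(x,y₀) ∉ S)
    (T : List V) :
    ∀ (c : Sym2 V → Fin (d+1)), Proper c S → IsFan S x y₀ c T →
      ∀ γ, ¬ HasCol S c x γ → ¬ HasCol S c (T.getLastD y₀) γ →
      ∃ c' : Sym2 V → Fin (d+1), Proper c' (insert s(x,y₀) S) := by
  classical
  induction T using List.reverseRecOn with
  | nil =>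
    intro c hprop _ γ h1 h2
    simp only [List.getLastD_nil] at h2
    exact ⟨Function.update c s(x,y₀) γ, proper_extend hprop he h1 h2⟩
  | append_singleton M t ih =>
    intro c hprop hfan γ h1 h2
    obtain ⟨hnodup, hedges, hchain⟩ := hfan
    have hlast : (M ++ [t]).getLastD y₀ = t := by
      simp [List.getLastD_concat]
    rw [hlast] at h2
    have hgS : s(x,t) ∈ S := hedges t (by simp)
    have hxt : x ≠ t := fun h => hnd _ hgS (by rw [← h]; simp [Sym2.isDiag_iff_proj_eq])
    have htM : t ∉ y₀ :: M := by
      have := hnodup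
      rw [show y₀ :: (M ++ [t]) = (y₀ :: M) ++ [t] by simp] at this
      exact fun ht => (List.disjoint_of_nodup_append this) ht (by simp)
    -- the chain split
    rw [chain_concat] at hchain
    have hpred : ¬ HasCol S c (M.getLastD y₀) (c s(x,t)) := hchain.2
    -- new coloring
    set c₁ := Function.update c s(x,t) γ with hc₁
    have hprop₁ : Proper c₁ S := proper_recolor hprop h1 h2
    have hγne : γ ≠ c s(x,t) := fun h => h2 ⟨s(x,t), hgS, by simp, h.symm⟩
    -- vertices in y₀ :: M are not in s(x,t)
    have hnotin : ∀ z ∈ y₀ :: M, z ∉ s(x,t) := by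
      intro z hz hmem
      rcases Sym2.mem_iff.1 hmem with rfl | rfl
      · exact fan_mem_ne_x hnd hxy ⟨hnodup, hedges, by
          rw [chain_concat]; exact hchain⟩ z (by
            rcases List.mem_cons.1 hz with rfl | hz'
            · simp
            · simp [hz']) rfl
      · exact htM hz
    have hfan₁ : IsFan S x y₀ c₁ M := by
      refine ⟨?_, fun z hz => hedges z (by simp [hz]), ?_⟩
      · have : y₀ :: (M ++ [t]) = (y₀ :: M) ++ [t] := by simp
        rw [this] at hnodup
        exact (List.nodup_append.1 hnodup).1
      · refine chain_imp_mem M y₀ hchain.1 fun u v hu hv hr => ?_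
        have hvne : v ≠ t := fun h => htM (h ▸ (List.mem_cons_of_mem _ hv))
        have hedge_ne : s(x,v) ≠ s(x,t) := by
          rw [Ne, Sym2.eq_iff]
          push_neg
          constructor
          · exact fun _ => hvne
          · intro hx; exact absurd hx hxt
        have hcv : c₁ s(x,v) = c s(x,v) := Function.update_of_ne hedge_ne _ _
        rw [hcv]
        rw [hascol_update_notmem (hnotin u hu)]
        exact hr
    -- apply induction hypothesis with color (c s(x,t))
    refine ih c₁ hprop₁ hfan₁ (c s(x,t)) ?_ ?_
    · rintro ⟨f, hf, hxf, hcf⟩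
      rw [hc₁] at hcf
      by_cases hfg : f = s(x,t)
      · subst hfg
        rw [Function.update_self] at hcf
        exact hγne hcf
      · rw [Function.update_of_ne hfg] at hcf
        exact hprop f hf s(x,t) hgS hfg ⟨x, hxf, by simp⟩ hcf
    · have hmem : M.getLastD y₀ ∈ y₀ :: M := by
        cases M with
        | nil => simp
        | cons a l => exact List.getLastD_mem_cons
      rw [hc₁, hascol_update_notmem (hnotin _ hmem)]
      exact hpred

end Fan


section Endgame

variable {d : ℕ} {S : Finset (Sym2 V)} {c : Sym2 V → Fin (d+1)} {α β : Fin (d+1)}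

/-- Max degree of the α/β graph is at most 2. -/
lemma K_deg2 (hprop : Proper c S) :
    ∀ v w₁ w₂ w₃, (Kgraph S c α β).Adj v w₁ → (Kgraph S c α β).Adj v w₂ →
      (Kgraph S c α β).Adj v w₃ → w₁ = w₂ ∨ w₁ = w₃ ∨ w₂ = w₃ := by
  intro v w₁ w₂ w₃ h1 h2 h3
  by_contra hcon
  push_neg at hcon
  obtain ⟨h12, h13, h23⟩ := hcon
  rw [Kgraph_adj] at h1 h2 h3
  have edge_ne : ∀ {a b : V}, a ≠ b → v ≠ a → v ≠ b → s(v,a) ≠ s(v,b) := by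
    intro a b hab hva hvb h
    rw [Sym2.eq_iff] at h
    rcases h with ⟨_, h⟩ | ⟨h, _⟩
    · exact hab h
    · exact hvb h
  have e12 := hprop _ h1.1.1 _ h2.1.1 (edge_ne h12 h1.2 h2.2) ⟨v, by simp, by simp⟩
  have e13 := hprop _ h1.1.1 _ h3.1.1 (edge_ne h13 h1.2 h3.2) ⟨v, by simp, by simp⟩
  have e23 := hprop _ h2.1.1 _ h3.1.1 (edge_ne h23 h2.2 h3.2) ⟨v, by simp, by simp⟩
  rcases h1.1.2 with hc1 | hc1 <;> rcases h2.1.2 with hc2 | hc2 <;>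
    rcases h3.1.2 with hc3 | hc3 <;>
    first
      | exact e12 (hc1.trans hc2.symm)
      | exact e13 (hc1.trans hc3.symm)
      | exact e23 (hc2.trans hc3.symm)

/-- A vertex missing one of the two colors is a "leaf" of the α/β graph. -/
lemma K_leaf (hprop : Proper c S) {δ : Fin (d+1)} (hδ : δ = α ∨ δ = β) {v : V}
    (hv : ¬ HasCol S c v δ) :
    ∀ w₁ w₂, (Kgraph S c α β).Adj v w₁ → (Kgraph S c α β).Adj v w₂ → w₁ = w₂ := by
  intro w₁ w₂ h1 h2
  by_contra h12
  rw [Kgraph_adj] at h1 h2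
  have hne : s(v,w₁) ≠ s(v,w₂) := by
    intro h
    rw [Sym2.eq_iff] at h
    rcases h with ⟨_, h⟩ | ⟨h, _⟩
    · exact h12 h
    · exact h2.2 h
  have key : ∀ {w : V}, s(v,w) ∈ S → (c s(v,w) = α ∨ c s(v,w) = β) → c s(v,w) ≠ δ := by
    intro w hw hcw heq
    exact hv ⟨s(v,w), hw, by simp, heq⟩
  have hcol := hprop _ h1.1.1 _ h2.1.1 hne ⟨v, by simp, by simp⟩
  rcases hδ with rfl | rfl
  · rcases h1.1.2 with hc1 | hc1
    · exact key h1.1.1 h1.1.2 hc1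
    · rcases h2.1.2 with hc2 | hc2
      · exact key h2.1.1 h2.1.2 hc2
      · exact hcol (hc1.trans hc2.symm)
  · rcases h1.1.2 with hc1 | hc1
    · rcases h2.1.2 with hc2 | hc2
      · exact hcol (hc1.trans hc2.symm)
      · exact key h2.1.1 h2.1.2 hc2
    · exact key h1.1.1 h1.1.2 hc1

/-- The component of any vertex is closed under α/β edges. -/
lemma UCl_reach (hnd : ∀ f ∈ S, ¬ f.IsDiag) (w₀ : V) :
    UCl S c α β {v | (Kgraph S c α β).Reachable v w₀} := by
  intro f hf hcol v hv w hw hvU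
  by_cases hvw : v = w
  · exact hvw ▸ hvU
  · have hfe : f = s(v,w) := (Sym2.mem_and_mem_iff hvw).1 ⟨hv, hw⟩
    have hadj : (Kgraph S c α β).Adj w v := by
      rw [Kgraph_adj]
      refine ⟨⟨?_, ?_⟩, fun h => hvw h.symm⟩
      · rwa [Sym2.eq_swap, ← hfe]
      · rwa [Sym2.eq_swap, ← hfe]
    exact hadj.reachable.trans hvU

lemma getLastD_append_cons : ∀ (P : List V) (u : V) (Q : List V) (a : V),
    (P ++ u :: Q).getLastD a = Q.getLastD u := by
  intro P
  induction P with
  | nil => intro u Q a; rw [List.nil_append, List.getLastD_cons]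
  | cons p P ih => intro u Q a; simp only [List.cons_append, List.getLastD_cons]; exact ih u Q p

end Endgame

section Extend

variable [DecidableEq V] {d : ℕ}

/-- The extension step of Vizing's theorem: given a proper coloring of `S`, we can also
properly color `insert s(x,y₀) S`. -/
lemma extend {S : Finset (Sym2 V)} {x y₀ : V} (hnd : ∀ f ∈ S, ¬ f.IsDiag) (hxy : x ≠ y₀)
    (he : s(x,y₀) ∉ S) (hdeg : ∀ v, (S.filter (fun f => v ∈ f)).card ≤ d)
    (c : Sym2 V → Fin (d+1)) (hprop : Proper c S) :
    ∃ c' : Sym2 V → Fin (d+1), Proper c' (insert s(x,y₀) S) := by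
  classical
  -- fans and a maximal fan
  have hfan_len : ∀ T : List V, IsFan S x y₀ c T → T.length ≤ d := by
    intro T hT
    have hmap : (T.map (fun z => s(x,z))).Nodup := by
      refine List.Nodup.map_on ?_ (List.Nodup.of_cons hT.1)
      intro z hz z' hz' hzz
      rw [Sym2.eq_iff] at hzz
      rcases hzz with ⟨_, h⟩ | ⟨h, h'⟩
      · exact h
      · exact absurd h' (fan_mem_ne_x hnd hxy hT z (by simp [hz]))
    have hsub : ∀ g ∈ T.map (fun z => s(x,z)), g ∈ S.filter (fun f => x ∈ f) := by
      intro g hg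
      obtain ⟨z, hz, rfl⟩ := List.mem_map.1 hg
      exact Finset.mem_filter.2 ⟨hT.2.1 z hz, by simp⟩
    calc T.length = (T.map (fun z => s(x,z))).length := by simp
    _ = (T.map (fun z => s(x,z))).toFinset.card := (List.toFinset_card_of_nodup hmap).symm
    _ ≤ (S.filter (fun f => x ∈ f)).card := by
        apply Finset.card_le_card
        intro g hg
        exact hsub g (List.mem_toFinset.1 hg)
    _ ≤ d := hdeg x
  have hP0 : (fun n => ∃ T : List V, IsFan S x y₀ c T ∧ T.length = n) 0 :=
    ⟨[], ⟨by simp, by simp, List.Chain.nil⟩, rfl⟩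
  classical
  set P : ℕ → Prop := fun n => ∃ T : List V, IsFan S x y₀ c T ∧ T.length = n with hP
  have hPk : P (Nat.findGreatest P d) := Nat.findGreatest_spec (Nat.zero_le d) hP0
  obtain ⟨T, hfanT, hlenT⟩ := hPk
  have hmax : ∀ T' : List V, IsFan S x y₀ c T' → T'.length ≤ T.length := by
    intro T' hT'
    by_contra hlt
    push_neg at hlt
    rw [hlenT] at hlt
    exact Nat.findGreatest_is_greatest hlt (hfan_len T' hT')
      ⟨T', hT', rfl⟩
  -- free colors
  set t : V := T.getLastD y₀ with ht
  obtain ⟨α, hα⟩ := exists_free S c x (hdeg x)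
  obtain ⟨β, hβ⟩ := exists_free S c t (hdeg t)
  by_cases hβx : HasCol S c x β
  case neg => exact rotate hnd hxy he T c hprop hfanT β hβx hβ
  -- β appears at x : on the edge to u
  obtain ⟨g, hgS, hxg, hcg⟩ := hβx
  set u : V := Sym2.Mem.other' hxg with hu
  have hgu : s(x,u) = g := Sym2.other_spec' hxg
  have hux : u ≠ x := by
    intro h
    apply hnd g hgS
    rw [← hgu, h]
    simp [Sym2.isDiag_iff_proj_eq]
  have hαβ : α ≠ β := fun h => hα (h ▸ ⟨g, hgS, hxg, hcg⟩)
  have htT : t ∈ y₀ :: T := ht ▸ List.getLastD_mem_cons (l := T) (a := y₀)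
  have hxt : x ≠ t := (fan_mem_ne_x hnd hxy hfanT t htT).symm
  -- u is in the fan
  have huy₀ : u ≠ y₀ := by
    intro h
    rw [h] at hgu
    exact he (hgu ▸ hgS)
  have hut : u ≠ t := by
    intro h
    exact hβ ⟨g, hgS, by rw [← hgu, h]; simp, hcg⟩
  have huT : u ∈ T := by
    by_contra huT
    have hfan' : IsFan S x y₀ c (T ++ [u]) := by
      refine ⟨?_, ?_, ?_⟩
      · rw [show y₀ :: (T ++ [u]) = (y₀ :: T) ++ [u] by simp, List.nodup_append]
        exact ⟨hfanT.1, by simp, by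
          intro a ha b hb hab
          simp only [List.mem_singleton] at hb
          subst hb
          subst hab
          rcases List.mem_cons.1 ha with h | h
          · exact huy₀ h
          · exact huT h⟩
      · intro z hz
        rcases List.mem_append.1 hz with h | h
        · exact hfanT.2.1 z h
        · simp only [List.mem_singleton] at h
          subst h
          exact hgu ▸ hgS
      · rw [chain_concat]
        refine ⟨hfanT.2.2, ?_⟩
        rw [hgu, hcg]
        exact hβ
    have := hmax _ hfan'
    simp at this
  -- decompose the fan at u
  obtain ⟨Pl, Ql, hTsplit⟩ := List.append_of_mem huT
  set w : V := Pl.getLastD y₀ with hw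
  have hchainT := hfanT.2.2
  rw [hTsplit, chain_split_old, chain_concat] at hchainT
  obtain ⟨⟨hchainP, hRwu⟩, hchainQ⟩ := hchainT
  have hwβ : ¬ HasCol S c w β := by
    rw [hgu, hcg] at hRwu
    exact hRwu
  -- positions/distinctness
  have hwP : w ∈ y₀ :: Pl := hw ▸ List.getLastD_mem_cons (l := Pl) (a := y₀)
  have hwT : w ∈ y₀ :: T := by
    rcases List.mem_cons.1 hwP with h | h
    · simp [h]
    · rw [hTsplit]
      simp only [List.mem_cons, List.mem_append]
      tauto
  have hxw : x ≠ w := (fan_mem_ne_x hnd hxy hfanT w hwT).symm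
  have htQ : t ∈ u :: Ql := by
    rw [ht, hTsplit, getLastD_append_cons]
    exact List.getLastD_mem_cons
  have hwt : w ≠ t := by
    intro h
    have hnodupT : (y₀ :: T).Nodup := hfanT.1
    rw [hTsplit, show y₀ :: (Pl ++ u :: Ql) = (y₀ :: Pl) ++ (u :: Ql) by simp,
      List.nodup_append] at hnodupT
    exact hnodupT.2.2 w hwP t htQ h
  have huPl : u ∉ y₀ :: Pl := by
    have hnodupT : (y₀ :: T).Nodup := hfanT.1
    rw [hTsplit, show y₀ :: (Pl ++ u :: Ql) = (y₀ :: Pl) ++ (u :: Ql) by simp,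
      List.nodup_append] at hnodupT
    intro h
    exact hnodupT.2.2 u h u (by simp) rfl
  -- edge colors in the fan are never α, and β only on the edge to u
  have hfan_col : ∀ b ∈ T, c s(x,b) ≠ α ∧ (c s(x,b) = β → b = u) := by
    intro b hb
    have hbS : s(x,b) ∈ S := hfanT.2.1 b hb
    constructor
    · intro h
      exact hα ⟨s(x,b), hbS, by simp, h⟩
    · intro h
      by_contra hbu
      have hne : s(x,b) ≠ g := by
        rw [← hgu, Ne, Sym2.eq_iff]
        push_neg
        exact ⟨fun _ => hbu, fun hxu => absurd hxu.symm hux⟩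
      exact hprop _ hbS _ hgS hne ⟨x, by simp, hxg⟩ (h.trans hcg.symm)
  -- the Kempe chain graph
  set K : SimpleGraph V := Kgraph S c α β with hK
  have hdegK := K_deg2 (α := α) (β := β) hprop
  have leaf_x := K_leaf (α := α) (β := β) hprop (Or.inl rfl) hα
  have leaf_t := K_leaf (α := α) (β := β) hprop (Or.inr rfl) hβ
  have leaf_w := K_leaf (α := α) (β := β) hprop (Or.inr rfl) hwβ
  by_cases hreach : K.Reachable x w
  · -- Case B : swap the component of t, rotate the full fan
    have hxtreach : ¬ K.Reachable x t := by
      intro h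
      exact three_leaf hdegK hxt hxw (Ne.symm hwt) leaf_x leaf_t leaf_w h hreach
    have hwtreach : ¬ K.Reachable w t := by
      intro h
      exact three_leaf hdegK (Ne.symm hxw) hwt hxt leaf_w leaf_x leaf_t
        hreach.symm h
    set U : Set V := {v | K.Reachable v t} with hU
    have hUcl : UCl S c α β U := UCl_reach hnd t
    have hxU : x ∉ U := hxtreach
    have hwU : w ∉ U := hwtreach
    have htU : t ∈ U := Reachable.refl t
    set c₁ : Sym2 V → Fin (d+1) := swapc S c α β U with hc₁
    have hprop₁ : Proper c₁ S := swapc_proper hUcl hαβ hprop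
    have hxedge : ∀ b : V, s(x,b) ∈ S → c₁ s(x,b) = c s(x,b) := fun b hbS =>
      swapc_eq_of_notmem hUcl hbS (by simp) hxU
    have chain_transfer : ∀ (a₀ : V) (L : List V), a₀ ∈ y₀ :: T → (∀ z ∈ L, z ∈ T ∧ z ≠ u) →
        List.Chain (fun a b => ¬ HasCol S c a (c s(x,b))) a₀ L →
        List.Chain (fun a b => ¬ HasCol S c₁ a (c₁ s(x,b))) a₀ L := by
      intro a₀ L ha₀ hL hch
      refine chain_imp_mem L a₀ hch fun a b ha hb hr => ?_
      obtain ⟨hbT, hbu⟩ := hL b hb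
      have hbS : s(x,b) ∈ S := hfanT.2.1 b hbT
      rw [hxedge b hbS]
      have h1 : c s(x,b) ≠ α := (hfan_col b hbT).1
      have h2 : c s(x,b) ≠ β := fun h => hbu ((hfan_col b hbT).2 h)
      rw [swapc_hascol_other h1 h2]
      exact hr
    have hnodupT : (y₀ :: T).Nodup := hfanT.1
    have huQl : u ∉ Ql := by
      have h2 : (u :: Ql).Nodup := by
        have : T.Nodup := hnodupT.of_cons
        rw [hTsplit] at this
        exact (List.nodup_append.1 this).2.1
      exact (List.nodup_cons.1 h2).1
    have hfan₁ : IsFan S x y₀ c₁ T := by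
      refine ⟨hfanT.1, hfanT.2.1, ?_⟩
      rw [hTsplit, chain_split_old, chain_concat]
      refine ⟨⟨?_, ?_⟩, ?_⟩
      · refine chain_transfer y₀ Pl (by simp) (fun z hz => ⟨by rw [hTsplit]; simp [hz],
          fun h => huPl (by simp [← h, hz])⟩) hchainP
      · have hcu : c₁ s(x,u) = β := by rw [hxedge u (by rw [hgu]; exact hgS), hgu, hcg]
        rw [hcu, ← hw]
        rw [swapc_hascol_notmem hUcl hwU]
        exact hwβ
      · refine chain_transfer u Ql (by rw [hTsplit]; simp) (fun z hz => ⟨by rw [hTsplit]; simp [hz],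
          fun h => huQl (h ▸ hz)⟩) hchainQ
    refine rotate hnd hxy he T c₁ hprop₁ hfan₁ α ?_ ?_
    · rw [hc₁, swapc_hascol_notmem hUcl hxU]
      exact hα
    · rw [← ht, hc₁, swapc_hascol_alpha hUcl hαβ htU]
      exact hβ
  · -- Case A : swap the component of w, rotate the prefix fan
    set U : Set V := {v | K.Reachable v w} with hU
    have hUcl : UCl S c α β U := UCl_reach hnd w
    have hxU : x ∉ U := hreach
    have hwU : w ∈ U := Reachable.refl w
    set c₁ : Sym2 V → Fin (d+1) := swapc S c α β U with hc₁
    have hprop₁ : Proper c₁ S := swapc_proper hUcl hαβ hprop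
    have hxedge : ∀ b : V, s(x,b) ∈ S → c₁ s(x,b) = c s(x,b) := fun b hbS =>
      swapc_eq_of_notmem hUcl hbS (by simp) hxU
    have hfan₁ : IsFan S x y₀ c₁ Pl := by
      refine ⟨?_, ?_, ?_⟩
      · have hnodupT : (y₀ :: T).Nodup := hfanT.1
        rw [hTsplit, show y₀ :: (Pl ++ u :: Ql) = (y₀ :: Pl) ++ (u :: Ql) by simp,
          List.nodup_append] at hnodupT
        exact hnodupT.1
      · intro z hz
        exact hfanT.2.1 z (by rw [hTsplit]; simp [hz])
      · refine chain_imp_mem Pl y₀ hchainP fun a b ha hb hr => ?_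
        have hbT : b ∈ T := by rw [hTsplit]; simp [hb]
        have hbS : s(x,b) ∈ S := hfanT.2.1 b hbT
        rw [hxedge b hbS]
        have h1 : c s(x,b) ≠ α := (hfan_col b hbT).1
        have h2 : c s(x,b) ≠ β := fun h => huPl (by
          have := (hfan_col b hbT).2 h
          simp [← this, hb])
        rw [swapc_hascol_other h1 h2]
        exact hr
    refine rotate hnd hxy he Pl c₁ hprop₁ hfan₁ α ?_ ?_
    · rw [hc₁, swapc_hascol_notmem hUcl hxU]
      exact hα
    · rw [← hw, hc₁, swapc_hascol_alpha hUcl hαβ hwU]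
      exact hwβ

end Extend

/-- Vizing's theorem for finite edge sets. -/
lemma finVizing [DecidableEq V] {d : ℕ} :
    ∀ (n : ℕ) (S : Finset (Sym2 V)), S.card = n → (∀ f ∈ S, ¬ f.IsDiag) →
      (∀ v, (S.filter (fun f => v ∈ f)).card ≤ d) →
      ∃ c : Sym2 V → Fin (d+1), Proper c S := by
  intro n
  induction n with
  | zero =>
    intro S hS _ _
    rw [Finset.card_eq_zero] at hS
    subst hS
    exact ⟨fun _ => 0, fun e he => absurd he (Finset.notMem_empty e)⟩
  | succ n ih =>
    intro S hS hnd hdeg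
    have hne : S.Nonempty := by
      rw [← Finset.card_pos, hS]; omega
    obtain ⟨e, heS⟩ := hne
    obtain ⟨⟨x, y⟩, hxy⟩ := Quot.exists_rep e
    have hexy : e = s(x,y) := hxy.symm
    have hxyne : x ≠ y := by
      intro h
      apply hnd e heS
      rw [hexy, h]
      simp [Sym2.isDiag_iff_proj_eq]
    set S' := S.erase e with hS'
    have hcard : S'.card = n := by
      rw [hS', Finset.card_erase_of_mem heS, hS]
      omega
    have hnd' : ∀ f ∈ S', ¬ f.IsDiag := fun f hf => hnd f (Finset.mem_of_mem_erase hf)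
    have hdeg' : ∀ v, (S'.filter (fun f => v ∈ f)).card ≤ d := by
      intro v
      refine le_trans (Finset.card_le_card ?_) (hdeg v)
      exact Finset.filter_subset_filter _ (Finset.erase_subset _ _)
    obtain ⟨c, hc⟩ := ih S' hcard hnd' hdeg'
    have heS' : s(x,y) ∉ S' := by
      rw [hS', ← hexy]
      exact Finset.notMem_erase e S
    obtain ⟨c', hc'⟩ := extend hnd' hxyne heS' hdeg' c hc
    refine ⟨c', ?_⟩
    rwa [← hexy, Finset.insert_erase heS] at hc'

end Vizing

/-- **Vizing's theorem.** If `G` is a simple graph with all vertex degrees at most `d`,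
then the edges of `G` can be properly edge-colored with `d+1` colors: there is a function
from the edge set to `Fin (d+1)` such that any two distinct edges sharing a vertex
receive different colors. -/
theorem vizing_proper_edge_coloring (V : Type) (G : SimpleGraph V) (d : ℕ)
    (hfin : ∀ v, (G.neighborSet v).Finite)
    (hdeg : ∀ v, (G.neighborSet v).ncard ≤ d) :
    ∃ c : G.edgeSet → Fin (d + 1),
      ∀ e f : G.edgeSet, e ≠ f → (∃ v : V, v ∈ (e : Sym2 V) ∧ v ∈ (f : Sym2 V)) →
        c e ≠ c f := by
  classical
  have key : ∀ (G' : G.lineGraph.Subgraph), G'.verts.Finite →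
      G'.coe →g (⊤ : SimpleGraph (Fin (d+1))) := by
    intro G' hfin'
    set S : Finset (Sym2 V) := Finset.image (fun e : G.edgeSet => (e : Sym2 V)) hfin'.toFinset with hSdef
    have hmemS : ∀ a : G.edgeSet, a ∈ G'.verts → (a : Sym2 V) ∈ S :=
      fun a ha => Finset.mem_image_of_mem _ (hfin'.mem_toFinset.2 ha)
    have hSedge : ∀ f ∈ S, f ∈ G.edgeSet := by
      intro f hf
      obtain ⟨a, _, hae⟩ := Finset.mem_image.1 hf
      rw [← hae]
      exact a.2
    have hnd : ∀ f ∈ S, ¬ f.IsDiag := fun f hf => G.not_isDiag_of_mem_edgeSet (hSedge f hf)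
    have hdegS : ∀ v, (S.filter (fun f => v ∈ f)).card ≤ d := by
      intro v
      refine le_trans ?_ (le_trans (le_of_eq (Set.ncard_eq_toFinset_card _ (hfin v)).symm) (hdeg v))
      refine Finset.card_le_card_of_injOn
        (fun f => if h : v ∈ f then Sym2.Mem.other' h else v) ?_ ?_
      · intro f hf
        rw [Finset.mem_coe, Finset.mem_filter] at hf
        dsimp only
        rw [dif_pos hf.2]
        rw [Finset.mem_coe, Set.Finite.mem_toFinset, SimpleGraph.mem_neighborSet, ← SimpleGraph.mem_edgeSet]
        rw [Sym2.other_spec' hf.2]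
        exact hSedge f hf.1
      · intro f hf f' hf' hff
        rw [Finset.coe_filter, Set.mem_setOf_eq] at hf hf'
        dsimp only at hff
        rw [dif_pos hf.2, dif_pos hf'.2] at hff
        rw [← Sym2.other_spec' hf.2, ← Sym2.other_spec' hf'.2, hff]
    have hex := Vizing.finVizing S.card S rfl hnd hdegS
    set c := hex.choose with hcdef
    have hc := hex.choose_spec
    refine ⟨fun a => c (a : G.edgeSet), ?_⟩
    intro a b hab
    rw [SimpleGraph.top_adj]
    rw [SimpleGraph.Subgraph.coe_adj] at hab
    have hadj := G'.adj_sub hab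
    rw [SimpleGraph.lineGraph_adj_iff_exists] at hadj
    refine hc _ (hmemS _ a.2) _ (hmemS _ b.2) ?_ hadj.2
    exact fun h => hadj.1 (Subtype.ext h)
  obtain ⟨F⟩ := SimpleGraph.nonempty_hom_of_forall_finite_subgraph_hom key
  refine ⟨fun e => F e, ?_⟩
  intro e f hef hshare
  have : G.lineGraph.Adj e f := SimpleGraph.lineGraph_adj_iff_exists.2 ⟨hef, hshare⟩
  exact F.map_adj this
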